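/- arXiv:2307.10535 — 12 statements merged into one kernel-verified Lean document; each statement's English description precedes it below -/
import Mathlib

section
/- Let (G,·,▷,Φ) be a twisted post group with sub-adjacent operation ∘ defined by a∘b = Φ(a)·(a▷b). Then the sub-adjacent operation ∘ is associative, i.e., (G,∘) is a semigroup. -/
/-- A (left) twisted post group: a group `G` with a binary operation `tri` (written `▷`)
and a cocycle `phi` such that each left multiplication `tri a` is a group automorphism,
`(a ∘ b) ▷ c = a ▷ (b ▷ c)` and `Φ(a ∘ b) = a ∘ Φ(b)`, where `a ∘ b = Φ(a)·(a ▷ b)`. -/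
structure TPG (G : Type*) [Group G] where
  tri : G → G → G
  phi : G → G
  tri_mul : ∀ a b c : G, tri a (b * c) = tri a b * tri a c
  tri_bij : ∀ a : G, Function.Bijective (tri a)
  tri_assoc : ∀ a b c : G, tri (phi a * tri a b) c = tri a (tri b c)
  phi_comp : ∀ a b : G, phi (phi a * tri a b) = phi a * tri a (phi b)

namespace TPG

variable {G : Type*} [Group G] (T : TPG G)

/-- The sub-adjacent operation `a ∘ b = Φ(a)·(a ▷ b)`. -/
def circ (a b : G) : G := T.phi a * T.tri a b

/-- `e_a = (L_a^▷)⁻¹(Φ(a)⁻¹·a)`. -/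
noncomputable def e (a : G) : G := Function.invFun (T.tri a) ((T.phi a)⁻¹ * a)

/-- `a† = (L_a^▷)⁻¹(Φ(a)⁻¹·e_a)`. -/
noncomputable def dag (a : G) : G := Function.invFun (T.tri a) ((T.phi a)⁻¹ * T.e a)

end TPG

/-- The sub-adjacent operation of a twisted post group is associative. -/
theorem circ_assoc {G : Type*} [Group G] (T : TPG G) :
    ∀ a b c : G, T.circ (T.circ a b) c = T.circ a (T.circ b c) := by
  intro a b c
  simp only [TPG.circ, T.tri_assoc, T.phi_comp, T.tri_mul, mul_assoc]
end

section
/- Let (G,·,▷,Φ) be a twisted post group with sub-adjacent operation ∘. For a∈G define e_a = (L_a^▷)^{-1}(Φ(a)^{-1}·a). Then a∘e_a = a and Φ(e_a) = 1, where 1 is the identity of (G,·). -/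
/-- For every `a`, `a ∘ e_a = a` and `Φ(e_a) = 1`. -/
theorem circ_e_self {G : Type*} [Group G] (T : TPG G) (a : G) :
    T.circ a (T.e a) = a ∧ T.phi (T.e a) = 1 := by
  have hinv : T.tri a (T.e a) = (T.phi a)⁻¹ * a :=
    Function.invFun_eq ((T.tri_bij a).surjective _)
  have h1 : T.circ a (T.e a) = a := by
    rw [TPG.circ, hinv]; group
  refine ⟨h1, ?_⟩
  have hone : T.tri a 1 = 1 := by
    have := T.tri_mul a 1 1
    rw [one_mul] at this
    exact right_eq_mul.mp this
  have h2 := T.phi_comp a (T.e a)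
  have h3 : T.phi a * T.tri a (T.e a) = a := h1
  rw [h3] at h2
  have h4 : T.tri a (T.phi (T.e a)) = 1 := mul_eq_left.mp h2.symm
  exact (T.tri_bij a).injective (h4.trans hone.symm)
end

section
/- Let (G,·,▷,Φ) be a twisted post group with sub-adjacent operation ∘, and let e_a = (L_a^▷)^{-1}(Φ(a)^{-1}·a). Then for all a,b ∈ G, e_a ▷ b = b and e_a ∘ b = b. -/
/-- For all `a b`, `e_a ▷ b = b` and `e_a ∘ b = b`. -/
theorem e_tri_circ {G : Type*} [Group G] (T : TPG G) (a b : G) :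
    T.tri (T.e a) b = b ∧ T.circ (T.e a) b = b := by
  have hinj := (T.tri_bij a).1
  have he : T.tri a (T.e a) = (T.phi a)⁻¹ * a :=
    Function.invFun_eq ((T.tri_bij a).2 _)
  have hcirc : T.phi a * T.tri a (T.e a) = a := by rw [he]; group
  have htri : ∀ c, T.tri (T.e a) c = c := by
    intro c
    have := T.tri_assoc a (T.e a) c
    rw [hcirc] at this
    exact hinj this.symm
  have hone : T.tri a 1 = 1 := by
    have := T.tri_mul a 1 1
    simpa using this.symm
  have hphi : T.phi (T.e a) = 1 := by
    have := T.phi_comp a (T.e a)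
    rw [hcirc] at this
    have h2 : T.tri a (T.phi (T.e a)) = 1 :=
      mul_left_cancel (a := T.phi a) (by rw [mul_one]; exact this.symm)
    exact hinj (h2.trans hone.symm)
  exact ⟨htri b, by rw [TPG.circ, hphi, htri, one_mul]⟩
end

section
/- Let (G,·,▷,Φ) be a twisted post group with sub-adjacent operation ∘. For a∈G, let G_a = {b∘e_a | b∈G}, where e_a = (L_a^▷)^{-1}(Φ(a)^{-1}·a). Then G_a is closed under ∘ and (G_a, ∘) is a group with identity e_a. -/
namespace TPG

variable {G : Type*} [Group G] (T : TPG G)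

lemma tri_e (a : G) : T.tri a (T.e a) = (T.phi a)⁻¹ * a :=
  Function.rightInverse_invFun (T.tri_bij a).2 _

lemma circ_e (a : G) : T.circ a (T.e a) = a := by
  rw [circ, tri_e, mul_inv_cancel_left]

lemma circ_assoc (a b c : G) : T.circ (T.circ a b) c = T.circ a (T.circ b c) := by
  simp only [circ, T.phi_comp, T.tri_assoc, T.tri_mul, mul_assoc]

lemma circ_inj (a : G) : Function.Injective (T.circ a) := by
  intro x y h
  exact (T.tri_bij a).1 (mul_left_cancel h)

lemma e_left_id (a x : G) : T.circ (T.e a) x = x := by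
  apply T.circ_inj a
  rw [← circ_assoc, circ_e]

end TPG

/-- `G_a = {b ∘ e_a | b ∈ G}` is closed under `∘` and `(G_a, ∘)` is a group
with identity `e_a`. -/
theorem Ga_group {G : Type*} [Group G] (T : TPG G) (a : G) :
    (∀ x ∈ {x : G | ∃ b : G, x = T.circ b (T.e a)},
      ∀ y ∈ {x : G | ∃ b : G, x = T.circ b (T.e a)},
        T.circ x y ∈ {x : G | ∃ b : G, x = T.circ b (T.e a)}) ∧
    T.e a ∈ {x : G | ∃ b : G, x = T.circ b (T.e a)} ∧
    (∀ x ∈ {x : G | ∃ b : G, x = T.circ b (T.e a)},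
      T.circ x (T.e a) = x ∧ T.circ (T.e a) x = x) ∧
    (∀ x ∈ {x : G | ∃ b : G, x = T.circ b (T.e a)},
      ∃ y ∈ {x : G | ∃ b : G, x = T.circ b (T.e a)},
        T.circ x y = T.e a ∧ T.circ y x = T.e a) := by
  refine ⟨?_, ⟨T.e a, (T.e_left_id a _).symm⟩, ?_, ?_⟩
  · rintro x ⟨b, rfl⟩ y ⟨c, rfl⟩
    exact ⟨T.circ (T.circ b (T.e a)) c, by simp only [T.circ_assoc, T.e_left_id]⟩
  · rintro x ⟨b, rfl⟩
    exact ⟨by rw [T.circ_assoc, T.e_left_id], T.e_left_id a _⟩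
  · rintro x ⟨b, rfl⟩
    set X := T.circ b (T.e a) with hX
    obtain ⟨y, hy⟩ : ∃ y, T.circ X y = T.e a :=
      ⟨Function.invFun (T.tri X) ((T.phi X)⁻¹ * T.e a), by
        rw [TPG.circ, Function.rightInverse_invFun (T.tri_bij X).2, mul_inv_cancel_left]⟩
    have hyx : T.circ y X = T.e a := by
      apply T.circ_inj X
      rw [← T.circ_assoc, hy, T.e_left_id, hX, T.circ_assoc, T.e_left_id]
    have hymem : y = T.circ y (T.e a) := by
      apply T.circ_inj X
      rw [hy, ← T.circ_assoc, hy, T.e_left_id]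
    exact ⟨y, ⟨y, hymem⟩, hy, hyx⟩
end

section
/- Let (G,·,▷,Φ) be a twisted post group with sub-adjacent operation ∘, and for a,b∈G let e_a, e_b be as usual. Then the map π_{a,b}: G_a → G_b given by π_{a,b}(t) = t∘e_b is a group isomorphism, where G_x = {c∘e_x | c∈G} carries the group structure from ∘. -/
section Aux

variable {G : Type*} [Group G] (T : TPG G)

lemma TPG.tri_e_s6 (a : G) : T.tri a (T.e a) = (T.phi a)⁻¹ * a :=
  Function.invFun_eq ((T.tri_bij a).2 _)

lemma TPG.circ_e_s6 (a : G) : T.circ a (T.e a) = a := by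
  rw [TPG.circ, T.tri_e_s6, mul_inv_cancel_left]

lemma TPG.circ_assoc_s6 (s t c : G) :
    T.circ (T.circ s t) c = T.circ s (T.circ t c) := by
  simp only [TPG.circ, T.tri_assoc, T.phi_comp, T.tri_mul, mul_assoc]

lemma TPG.tri_one (a : G) : T.tri a 1 = 1 := by
  have h := T.tri_mul a 1 1
  rw [mul_one, eq_comm, mul_eq_left] at h
  exact h

lemma TPG.tri_e_id (a c : G) : T.tri (T.e a) c = c := by
  have h := T.tri_assoc a (T.e a) c
  rw [T.tri_e_s6, mul_inv_cancel_left] at h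
  exact ((T.tri_bij a).1 h.symm)

lemma TPG.phi_e (a : G) : T.phi (T.e a) = 1 := by
  have h := T.phi_comp a (T.e a)
  rw [T.tri_e_s6, mul_inv_cancel_left, left_eq_mul] at h
  exact (T.tri_bij a).1 (h.trans (T.tri_one a).symm)

lemma TPG.e_circ (a x : G) : T.circ (T.e a) x = x := by
  rw [TPG.circ, T.phi_e, T.tri_e_id, one_mul]

end Aux

/-- The map `t ↦ t ∘ e_b` is a group isomorphism from `(G_a, ∘)` to `(G_b, ∘)`. -/
theorem pi_iso {G : Type*} [Group G] (T : TPG G) (a b : G) :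
    (∀ t ∈ {x : G | ∃ c : G, x = T.circ c (T.e a)},
      T.circ t (T.e b) ∈ {x : G | ∃ c : G, x = T.circ c (T.e b)}) ∧
    (∀ s ∈ {x : G | ∃ c : G, x = T.circ c (T.e a)},
      ∀ t ∈ {x : G | ∃ c : G, x = T.circ c (T.e a)},
        T.circ (T.circ s t) (T.e b) = T.circ (T.circ s (T.e b)) (T.circ t (T.e b))) ∧
    (∀ s ∈ {x : G | ∃ c : G, x = T.circ c (T.e a)},
      ∀ t ∈ {x : G | ∃ c : G, x = T.circ c (T.e a)},
        T.circ s (T.e b) = T.circ t (T.e b) → s = t) ∧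
    (∀ y ∈ {x : G | ∃ c : G, x = T.circ c (T.e b)},
      ∃ t ∈ {x : G | ∃ c : G, x = T.circ c (T.e a)}, T.circ t (T.e b) = y) := by
  constructor
  · rintro t _
    exact ⟨T.circ t (T.e b), by rw [T.circ_assoc_s6, T.e_circ]⟩
  refine ⟨?_, ?_, ?_⟩
  · rintro s hs t ht
    rw [T.circ_assoc_s6, T.circ_assoc_s6, T.e_circ]
  · rintro s ⟨c, rfl⟩ t ⟨d, rfl⟩ h
    have h2 := congrArg (fun z => T.circ z (T.e a)) h
    simpa only [T.circ_assoc_s6, T.e_circ] using h2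
  · rintro y ⟨c, rfl⟩
    refine ⟨T.circ (T.circ c (T.e b)) (T.e a), ⟨T.circ c (T.e b), rfl⟩, ?_⟩
    rw [T.circ_assoc_s6, T.circ_assoc_s6, T.e_circ, T.e_circ]
end

section
/- Let (G,·,▷,Φ) be a twisted post group with sub-adjacent operation ∘, let G_1 = Φ(G) (a group under ∘ with identity e_1) and K = {e_a | a∈G}. Define * on G_1 × K by (a_1,e_{b_1})*(a_2,e_{b_2}) = (a_1∘a_2, e_{b_2}). Then the map Ψ(a) = (a∘e_1, e_a) is a semigroup isomorphism from (G,∘) onto (G_1 × K, *). -/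
namespace TPG

variable {G : Type*} [Group G] (T : TPG G)

lemma tri_dag (a : G) : T.tri a (T.dag a) = (T.phi a)⁻¹ * T.e a :=
  Function.invFun_eq ((T.tri_bij a).surjective _)

lemma tri_one_s9 (a : G) : T.tri a 1 = 1 := by
  have h := T.tri_mul a 1 1
  simp at h
  exact h

lemma tri_inv (a b : G) : T.tri a b⁻¹ = (T.tri a b)⁻¹ := by
  have h : T.tri a b⁻¹ * T.tri a b = 1 := by
    rw [← T.tri_mul, inv_mul_cancel, T.tri_one_s9]
  exact eq_inv_of_mul_eq_one_left h

lemma circ_dag (a : G) : T.circ a (T.dag a) = T.e a := by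
  rw [circ, tri_dag, mul_inv_cancel_left]

lemma tri_circ (a b c : G) : T.tri (T.circ a b) c = T.tri a (T.tri b c) :=
  T.tri_assoc a b c

lemma phi_circ (a b : G) : T.phi (T.circ a b) = T.circ a (T.phi b) :=
  T.phi_comp a b

lemma tri_e_id_s9 (a c : G) : T.tri (T.e a) c = c := by
  have h : T.tri (T.circ a (T.e a)) c = T.tri a (T.tri (T.e a) c) := T.tri_circ a (T.e a) c
  rw [circ_e] at h
  exact ((T.tri_bij a).injective h).symm

lemma e_circ_s9 (a b : G) : T.e (T.circ a b) = T.e b := by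
  apply (T.tri_bij (T.circ a b)).injective
  rw [tri_e, tri_circ, tri_e, T.tri_mul, tri_inv, phi_circ, circ, circ, mul_inv_rev]
  group

lemma e_e (a : G) : T.e (T.e a) = T.e a := by
  have h := T.e_circ_s9 a (T.e a)
  rw [T.circ_e] at h
  exact h.symm

lemma phi_e_s9 (a : G) : T.phi (T.e a) = 1 := by
  have h := T.phi_circ a (T.e a)
  rw [circ_e, circ] at h
  have : T.tri a (T.phi (T.e a)) = 1 := by
    have := mul_left_cancel (a := T.phi a) (b := T.tri a (T.phi (T.e a))) (c := 1)
    apply this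
    rw [mul_one, ← h]
  apply (T.tri_bij a).injective
  rw [this, T.tri_one_s9]

lemma circ_e_left (a c : G) : T.circ (T.e a) c = c := by
  rw [circ, phi_e_s9, tri_e_id_s9, one_mul]

lemma phi_eq_circ_one (a : G) : T.phi a = T.circ a 1 := by
  rw [circ, tri_one_s9, mul_one]

lemma phi_dag_one : T.phi (T.dag 1) = T.e 1 := by
  have h1 : T.circ 1 (T.dag 1) = T.e 1 := T.circ_dag 1
  have h2 := T.phi_circ 1 (T.dag 1)
  rw [h1, phi_e_s9, circ] at h2
  have h3 : T.tri 1 (T.phi (T.dag 1)) = (T.phi 1)⁻¹ := by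
    have := mul_eq_one_iff_inv_eq.mp h2.symm
    rw [← this]
  have h4 : T.tri 1 (T.e 1) = (T.phi 1)⁻¹ := by rw [tri_e, mul_one]
  exact (T.tri_bij 1).injective (h3.trans h4.symm)

end TPG

/-- The map `Ψ(a) = (a ∘ e_1, e_a)` is a semigroup isomorphism from `(G, ∘)` onto
`(G_1 ⊕ K, *)` where `(a₁, e_{b₁}) * (a₂, e_{b₂}) = (a₁ ∘ a₂, e_{b₂})`,
with `G_1 = Φ(G)` and `K = {e_a | a ∈ G}`. -/
theorem decomposition {G : Type*} [Group G] (T : TPG G) :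
    Function.Injective (fun a : G => (T.circ a (T.e 1), T.e a)) ∧
    Set.range (fun a : G => (T.circ a (T.e 1), T.e a)) =
      (Set.range T.phi) ×ˢ (Set.range T.e) ∧
    (∀ a b : G,
      (T.circ (T.circ a b) (T.e 1), T.e (T.circ a b)) =
        (T.circ (T.circ a (T.e 1)) (T.circ b (T.e 1)), T.e b)) := by
  refine ⟨?_, ?_, ?_⟩
  · intro a b h
    simp only [Prod.mk.injEq] at h
    obtain ⟨h1, h2⟩ := h
    calc a = T.circ (T.circ a (T.e 1)) (T.e a) := by
            rw [T.circ_assoc, T.circ_e_left, T.circ_e]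
      _ = T.circ (T.circ b (T.e 1)) (T.e b) := by rw [h1, h2]
      _ = b := by rw [T.circ_assoc, T.circ_e_left, T.circ_e]
  · ext ⟨x, y⟩
    simp only [Set.mem_range, Set.mem_prod, Prod.mk.injEq]
    constructor
    · rintro ⟨a, ha, hb⟩
      refine ⟨⟨T.circ a (T.dag 1), ?_⟩, ⟨a, hb⟩⟩
      rw [T.phi_circ, T.phi_dag_one, ha]
    · rintro ⟨⟨u, hu⟩, ⟨v, hv⟩⟩
      refine ⟨T.circ x (T.e v), ?_, ?_⟩
      · rw [T.circ_assoc, T.circ_e_left]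
        have : T.e 1 = T.e x := by rw [← hu, T.phi_eq_circ_one, T.e_circ_s9]
        rw [this, T.circ_e]
      · rw [T.e_circ_s9, T.e_e, hv]
  · intro a b
    simp only [Prod.mk.injEq]
    refine ⟨?_, T.e_circ_s9 a b⟩
    rw [T.circ_assoc, T.circ_assoc, T.circ_e_left]
end

section
/- Let (G,·) be a group and let B_1, B_2: G→G satisfy B_1(a)B_1(b) = B_1(B_1(a)·b·B_2(a)) and B_2(b)B_2(a) = B_2(B_1(a)·b·B_2(a)) for all a,b. Define a▷b = B_2(a)^{-1}·b·B_2(a) and Φ(a) = B_1(a)·B_2(a). Then (G,·,▷,Φ) is a twisted post group. -/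
/-- Every Rota-Baxter system of groups gives a twisted post group via
conjugation by `B₂` and cocycle `Φ(a) = B₁(a)·B₂(a)`. -/
theorem rotaBaxterSystem_toTPG {G : Type*} [Group G] (B₁ B₂ : G → G)
    (h1 : ∀ a b : G, B₁ a * B₁ b = B₁ (B₁ a * b * B₂ a))
    (h2 : ∀ a b : G, B₂ b * B₂ a = B₂ (B₁ a * b * B₂ a)) :
    ∃ T : TPG G, (∀ a b : G, T.tri a b = (B₂ a)⁻¹ * b * B₂ a) ∧
      (∀ a : G, T.phi a = B₁ a * B₂ a) := by
  refine ⟨{ tri := fun a b => (B₂ a)⁻¹ * b * B₂ a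
            phi := fun a => B₁ a * B₂ a
            tri_mul := by intro a b c; group
            tri_bij := by
              intro a
              have : ((fun a b => (B₂ a)⁻¹ * b * B₂ a) a) = ⇑(MulAut.conj (B₂ a)⁻¹) := by
                funext b; simp [MulAut.conj]
              exact (congrArg Function.Bijective this).mpr (MulAut.conj (B₂ a)⁻¹).bijective
            tri_assoc := by
              intro a b c
              have key : B₁ a * B₂ a * ((B₂ a)⁻¹ * b * B₂ a) = B₁ a * b * B₂ a := by group
              rw [key, ← h2 a b]
              group
            phi_comp := by
              intro a b
              have key : B₁ a * B₂ a * ((B₂ a)⁻¹ * b * B₂ a) = B₁ a * b * B₂ a := by group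
              rw [key, ← h1 a b, ← h2 a b]
              group }, fun a b => rfl, fun a => rfl⟩
end

section
/- Let (G,·,▷,Φ) be a weak twisted post group and define a∘b = Φ(a)·(a▷b). Then (G,·,∘,Φ) is a skew truss: (G,∘) is a semigroup and a∘(b·c) = (a∘b)·Φ(a)^{-1}·(a∘c) for all a,b,c. -/
/-- A weak twisted post group: each left multiplication is only required to be a
group endomorphism of `(G, ·)`. -/
structure WTPG (G : Type*) [Group G] where
  tri : G → G → G
  phi : G → G
  tri_mul : ∀ a b c : G, tri a (b * c) = tri a b * tri a c
  tri_assoc : ∀ a b c : G, tri (phi a * tri a b) c = tri a (tri b c)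
  phi_comp : ∀ a b : G, phi (phi a * tri a b) = phi a * tri a (phi b)

namespace WTPG
variable {G : Type*} [Group G] (T : WTPG G)
/-- The sub-adjacent operation. -/
def circ (a b : G) : G := T.phi a * T.tri a b
end WTPG

/-- The sub-adjacent structure of a weak twisted post group is a skew truss:
`∘` is associative and `a ∘ (b·c) = (a ∘ b)·Φ(a)⁻¹·(a ∘ c)`. -/
theorem wtpg_to_skewTruss {G : Type*} [Group G] (T : WTPG G) :
    (∀ a b c : G, T.circ (T.circ a b) c = T.circ a (T.circ b c)) ∧
    (∀ a b c : G, T.circ a (b * c) = T.circ a b * (T.phi a)⁻¹ * T.circ a c) := by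
  constructor
  · intro a b c
    simp only [WTPG.circ, T.phi_comp, T.tri_assoc, T.tri_mul, mul_assoc]
  · intro a b c
    simp only [WTPG.circ, T.tri_mul]
    group
end

section
/- Let (G,·,▷,Φ) be a twisted post group. Then Φ is idempotent (Φ∘Φ = Φ) if and only if Φ(1) = 1, where 1 is the identity of (G,·). -/
/-- The cocycle of a twisted post group is idempotent iff `Φ(1) = 1`. -/
theorem idempotent_iff {G : Type*} [Group G] (T : TPG G) :
    (∀ a : G, T.phi (T.phi a) = T.phi a) ↔ T.phi 1 = 1 := by
  have tri_one : ∀ a : G, T.tri a 1 = 1 := by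
    intro a
    have h := T.tri_mul a 1 1
    rw [one_mul] at h
    exact (left_eq_mul.mp h)
  have key : ∀ a : G, T.phi (T.phi a) = T.phi a * T.tri a (T.phi 1) := by
    intro a
    have h := T.phi_comp a 1
    rwa [tri_one a, mul_one] at h
  constructor
  · intro h
    have h1 := key 1
    rw [h 1, left_eq_mul] at h1
    have := (T.tri_bij 1).injective (h1.trans (tri_one 1).symm)
    exact this
  · intro h a
    rw [key a, h, tri_one, mul_one]
end

section
/- Let (G,·,▷,Φ) be a twisted post group such that Φ is idempotent. Then Φ(a)▷b = a▷b for all a,b ∈ G. -/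
/-- If the cocycle of a twisted post group is idempotent, then `Φ(a) ▷ b = a ▷ b`. -/
theorem phi_tri {G : Type*} [Group G] (T : TPG G)
    (hid : ∀ a : G, T.phi (T.phi a) = T.phi a) :
    ∀ a b : G, T.tri (T.phi a) b = T.tri a b := by
  -- each `tri a` fixes 1
  have h1 : ∀ a : G, T.tri a 1 = 1 := by
    intro a
    have := T.tri_mul a 1 1
    rw [one_mul] at this
    exact left_eq_mul.mp this
  -- φ 1 = 1
  have hphi1 : T.phi 1 = 1 := by
    have h := T.phi_comp 1 1
    rw [h1, mul_one, hid] at h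
    have h2 : T.tri 1 (T.phi 1) = 1 := by
      have := left_eq_mul.mp h
      exact this
    have := (T.tri_bij 1).1 (h2.trans (h1 1).symm)
    exact this
  -- tri 1 = id
  have htri1 : ∀ c : G, T.tri 1 c = c := by
    intro c
    have h := T.tri_assoc 1 1 c
    rw [h1, mul_one, hphi1] at h
    exact (T.tri_bij 1).1 h.symm
  intro a b
  have h := T.tri_assoc a 1 b
  rw [h1, mul_one, htri1] at h
  exact h
end

section
/- Let (G,+,▷,◁,Φ) be an abelian two-sided weak twisted post group with sub-adjacent operation ∘. Then (G,+,∘) is a nonunital (not necessarily unital, associative) ring if and only if Φ is the trivial map Φ(a) = 0 for all a∈G. -/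
/-- For an abelian two-sided weak twisted post group `(G, +, ▷, ◁, Φ)` with
sub-adjacent operation `∘`, `(G, +, ∘)` is a nonunital ring iff `Φ` is trivial. -/
theorem twoSided_ring_iff {G : Type*} [AddCommGroup G]
    (tri tril : G → G → G) (phi : G → G) (circ : G → G → G)
    (hcircL : ∀ a b : G, circ a b = phi a + tri a b)
    (hcircR : ∀ a b : G, circ a b = tril a b + phi b)
    (hL1 : ∀ a b c : G, tri a (b + c) = tri a b + tri a c)
    (hL2 : ∀ a b c : G, tri (circ a b) c = tri a (tri b c))
    (hL3 : ∀ a b : G, phi (circ a b) = circ a (phi b))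
    (hR1 : ∀ a b c : G, tril (a + b) c = tril a c + tril b c)
    (hR2 : ∀ a b c : G, tril a (circ b c) = tril (tril a b) c)
    (hR3 : ∀ a b : G, phi (circ a b) = circ (phi a) b) :
    ((∀ a b c : G, circ (circ a b) c = circ a (circ b c)) ∧
     (∀ a b c : G, circ a (b + c) = circ a b + circ a c) ∧
     (∀ a b c : G, circ (a + b) c = circ a c + circ b c)) ↔
    (∀ a : G, phi a = 0) := by
  constructor
  · rintro ⟨-, hdl, -⟩ a
    have h := hdl a 0 0
    simp only [hcircL, hL1] at h
    abel_nf at h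
    have h2 : phi a = (2 : ℤ) • phi a := add_right_cancel h
    exact left_eq_add.mp (h2.trans (two_zsmul (phi a)))
  · intro hphi
    have hce : ∀ a b : G, circ a b = tri a b := fun a b => by
      rw [hcircL, hphi, zero_add]
    have hce' : ∀ a b : G, circ a b = tril a b := fun a b => by
      rw [hcircR, hphi, add_zero]
    refine ⟨fun a b c => ?_, fun a b c => ?_, fun a b c => ?_⟩
    · rw [hce (circ a b) c, hL2, hce a (circ b c), hce b c]
    · rw [hce, hce, hce, hL1]
    · rw [hce', hce', hce', hR1]
end

section
/- Let (G,·,▷,◁,Φ) be a two-sided twisted post group with sub-adjacent operation ∘. Then (G,∘) is a group (with identity e_1), Φ is surjective onto G, and defining a•b = (a∘1†)∘b makes (G,·,•) a two-sided skew brace: (G,·) and (G,•) are groups satisfying both a•(b·c) = (a•b)·a^{-1}·(a•c) and (a·b)•c = (a•c)·c^{-1}·(b•c). -/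
/-- A two-sided twisted post group: `(G,·,▷,Φ)` is a left twisted post group,
`(G,·,◁,Φ)` is a right twisted post group, and the two sub-adjacent operations
coincide. -/
structure TwoSidedTPG (G : Type*) [Group G] extends TPG G where
  tril : G → G → G
  tril_mul : ∀ a b c : G, tril (a * b) c = tril a c * tril b c
  tril_bij : ∀ b : G, Function.Bijective (fun a : G => tril a b)
  tril_assoc : ∀ a b c : G, tril a (phi b * tri b c) = tril (tril a b) c
  phi_comp' : ∀ a b : G, phi (phi a * tri a b) = tril (phi a) b * phi b
  circ_eq : ∀ a b : G, phi a * tri a b = tril a b * phi b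

namespace TwoSidedTPG

variable {G : Type*} [Group G] (T : TwoSidedTPG G)

/-- `a ▷ 1 = 1`. -/
lemma tri_one (a : G) : T.tri a 1 = 1 := by
  have h := T.tri_mul a 1 1
  rw [one_mul] at h
  exact (left_eq_mul.mp h)

/-- The sub-adjacent operation is associative. -/
lemma circ_assoc (a b c : G) : T.circ (T.circ a b) c = T.circ a (T.circ b c) := by
  simp only [TPG.circ]
  rw [T.phi_comp, T.tri_assoc, T.tri_mul, mul_assoc]

/-- Left translations of `∘` are bijective. -/
lemma circ_left_bij (a : G) : Function.Bijective (T.circ a) := by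
  have h : T.circ a = (fun x => T.phi a * x) ∘ T.tri a := rfl
  rw [h]
  exact (Group.mulLeft_bijective (T.phi a)).comp (T.tri_bij a)

/-- Right translations of `∘` are bijective. -/
lemma circ_right_bij (b : G) : Function.Bijective (fun a => T.circ a b) := by
  have h : (fun a => T.circ a b) = (fun x => x * T.phi b) ∘ (fun a => T.tril a b) := by
    funext a
    exact T.circ_eq a b
  rw [h]
  exact (Group.mulRight_bijective (T.phi b)).comp (T.tril_bij b)

/-- `a ∘ e_a = a`. -/
lemma circ_e (a : G) : T.circ a (T.e a) = a := by
  have h : T.tri a (T.e a) = (T.phi a)⁻¹ * a :=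
    Function.rightInverse_invFun (T.tri_bij a).2 _
  show T.phi a * T.tri a (T.e a) = a
  rw [h, mul_inv_cancel_left]

/-- `e_1` is a right identity for `∘`. -/
lemma circ_e_one_right (x : G) : T.circ x (T.e 1) = x := by
  obtain ⟨a, ha⟩ := (T.circ_right_bij 1).2 x
  rw [← ha, T.circ_assoc, T.circ_e 1]

/-- `e_1` is a left identity for `∘`. -/
lemma circ_e_one_left (x : G) : T.circ (T.e 1) x = x := by
  obtain ⟨f, hf'⟩ := (T.circ_right_bij 1).2 1
  have hf : T.circ f 1 = 1 := hf'
  have hfx : ∀ y : G, T.circ f y = y := by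
    intro y
    obtain ⟨b, hb⟩ := (T.circ_left_bij 1).2 y
    rw [← hb, ← T.circ_assoc, hf]
  have hfe : f = T.e 1 := by
    have h1 := hfx (T.e 1)
    rw [T.circ_e_one_right f] at h1
    exact h1
  rw [← hfe]
  exact hfx x

/-- Two-sided `∘`-inverses exist. -/
lemma circ_inv (x : G) : ∃ y : G, T.circ x y = T.e 1 ∧ T.circ y x = T.e 1 := by
  obtain ⟨y, hy⟩ := (T.circ_left_bij x).2 (T.e 1)
  obtain ⟨z, hz'⟩ := (T.circ_right_bij x).2 (T.e 1)
  have hz : T.circ z x = T.e 1 := hz'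
  have h1 : z = T.circ z (T.circ x y) := by rw [hy, T.circ_e_one_right]
  rw [← T.circ_assoc, hz, T.circ_e_one_left] at h1
  exact ⟨y, hy, by rw [← h1]; exact hz⟩

/-- `1 ∘ 1† = e_1`. -/
lemma circ_one_dag : T.circ 1 (T.dag 1) = T.e 1 := by
  have h : T.tri 1 (T.dag 1) = (T.phi 1)⁻¹ * T.e 1 :=
    Function.rightInverse_invFun (T.tri_bij 1).2 _
  show T.phi 1 * T.tri 1 (T.dag 1) = T.e 1
  rw [h, mul_inv_cancel_left]

/-- `1† ∘ 1 = e_1`. -/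
lemma circ_dag_one : T.circ (T.dag 1) 1 = T.e 1 := by
  obtain ⟨z, hz'⟩ := (T.circ_right_bij 1).2 (T.e 1)
  have hz : T.circ z 1 = T.e 1 := hz'
  have h1 : z = T.circ z (T.circ 1 (T.dag 1)) := by
    rw [T.circ_one_dag, T.circ_e_one_right]
  rw [← T.circ_assoc, hz, T.circ_e_one_left] at h1
  rw [← h1]
  exact hz

/-- `Φ(x) = x ∘ 1`. -/
lemma phi_eq (x : G) : T.phi x = T.circ x 1 := by
  show T.phi x = T.phi x * T.tri x 1
  rw [T.tri_one, mul_one]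

/-- `Φ(a ∘ b) = Φ(a) ∘ b`. -/
lemma phi_circ (a b : G) : T.phi (T.circ a b) = T.circ (T.phi a) b := by
  have h2 := T.circ_eq (T.phi a) b
  show T.phi (T.phi a * T.tri a b) = _
  rw [T.phi_comp' a b]
  exact h2.symm

/-- `Φ(a ∘ 1†) = a`. -/
lemma phi_theta (a : G) : T.phi (T.circ a (T.dag 1)) = a := by
  rw [T.phi_eq, T.circ_assoc, T.circ_dag_one, T.circ_e_one_right]

/-- `Φ(1† ∘ c) = c`. -/
lemma phi_dag_circ (c : G) : T.phi (T.circ (T.dag 1) c) = c := by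
  rw [T.phi_circ, T.phi_eq, T.circ_dag_one, T.circ_e_one_left]

end TwoSidedTPG

/-- For a two-sided twisted post group, `(G, ∘)` is a group with identity `e_1`,
`Φ` is surjective, and `a • b = (a ∘ 1†) ∘ b` makes `(G, ·, •)` a two-sided
skew brace. -/
theorem twoSided_skewBrace {G : Type*} [Group G] (T : TwoSidedTPG G) :
    (∀ x : G, T.circ x (T.e 1) = x ∧ T.circ (T.e 1) x = x) ∧
    (∀ x : G, ∃ y : G, T.circ x y = T.e 1 ∧ T.circ y x = T.e 1) ∧
    Function.Surjective T.phi ∧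
    (∀ a b c : G,
      T.circ (T.circ (T.circ (T.circ a (T.dag 1)) b) (T.dag 1)) c =
        T.circ (T.circ a (T.dag 1)) (T.circ (T.circ b (T.dag 1)) c)) ∧
    (∀ a : G, T.circ (T.circ a (T.dag 1)) 1 = a ∧ T.circ (T.circ 1 (T.dag 1)) a = a) ∧
    (∀ a : G, ∃ b : G, T.circ (T.circ a (T.dag 1)) b = 1 ∧
      T.circ (T.circ b (T.dag 1)) a = 1) ∧
    (∀ a b c : G, T.circ (T.circ a (T.dag 1)) (b * c) =
      T.circ (T.circ a (T.dag 1)) b * a⁻¹ * T.circ (T.circ a (T.dag 1)) c) ∧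
    (∀ a b c : G, T.circ (T.circ (a * b) (T.dag 1)) c =
      T.circ (T.circ a (T.dag 1)) c * c⁻¹ * T.circ (T.circ b (T.dag 1)) c) := by
  refine ⟨fun x => ⟨T.circ_e_one_right x, T.circ_e_one_left x⟩, T.circ_inv, ?_, ?_, ?_, ?_, ?_, ?_⟩
  · -- surjectivity of Φ
    intro g
    obtain ⟨a, ha⟩ := (T.circ_right_bij 1).2 g
    exact ⟨a, by rw [T.phi_eq]; exact ha⟩
  · -- associativity of •
    intro a b c
    simp only [T.circ_assoc]
  · -- identity for •
    intro a
    constructor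
    · rw [T.circ_assoc, T.circ_dag_one, T.circ_e_one_right]
    · rw [T.circ_one_dag, T.circ_e_one_left]
  · -- inverses for •
    intro a
    obtain ⟨y, hy1, hy2⟩ := T.circ_inv a
    refine ⟨T.circ 1 (T.circ y 1), ?_, ?_⟩
    · rw [T.circ_assoc, ← T.circ_assoc (T.dag 1) 1, T.circ_dag_one, T.circ_e_one_left,
        ← T.circ_assoc, hy1, T.circ_e_one_left]
    · rw [T.circ_assoc 1, T.circ_assoc y, T.circ_one_dag, T.circ_e_one_right y,
        T.circ_assoc, hy2, T.circ_e_one_right]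
  · -- left skew brace law
    intro a b c
    have hA : T.phi (T.circ a (T.dag 1)) = a := T.phi_theta a
    simp only [TPG.circ] at hA ⊢
    rw [hA, T.tri_mul]
    group
  · -- right skew brace law
    intro a b c
    have hD : T.phi (T.circ (T.dag 1) c) = c := T.phi_dag_circ c
    have key : ∀ x : G, T.circ x (T.circ (T.dag 1) c)
        = T.tril x (T.circ (T.dag 1) c) * c := by
      intro x
      have h := T.circ_eq x (T.circ (T.dag 1) c)
      rw [hD] at h
      exact h
    rw [T.circ_assoc, T.circ_assoc, T.circ_assoc, key, key, key, T.tril_mul]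
    group
end
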